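/- Let $k \geq 2$ be an integer and let $a_1, \ldots, a_p$ be nonnegative integers with $a_i < k$ for all $i$ and $\sum_{i=1}^p a_i = k+1$. Then $\left(\prod_{i=1}^p \binom{k}{a_i}\right) \cdot \left(\sum_{s<t} a_s a_t - k\right) > 0$. -/

import Mathlib

open Finset

/-- Lemma 3.3 (positivity): for `k ≥ 2` and nonnegative integers `a₁,…,a_p` with
`aᵢ < k` and `∑ aᵢ = k+1`, the product `(∏ C(k,aᵢ)) · (∑_{s<t} a_s a_t − k)` is positive. -/
theorem chern_ineq_pos (k p : ℕ) (hk : 2 ≤ k) (a : Fin p → ℕ)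
    (ha : ∀ i, a i < k) (hsum : ∑ i, a i = k + 1) :
    0 < (∏ i, (k.choose (a i) : ℤ)) *
      ((∑ st ∈ Finset.univ.filter (fun st : Fin p × Fin p => st.1 < st.2),
        (a st.1 : ℤ) * (a st.2 : ℤ)) - (k : ℤ)) := by
  set S : ℕ := ∑ st ∈ Finset.univ.filter (fun st : Fin p × Fin p => st.1 < st.2),
      a st.1 * a st.2 with hS
  -- full double sum equals (k+1)^2
  have hfull : ∑ st ∈ (Finset.univ : Finset (Fin p × Fin p)), a st.1 * a st.2
      = (k + 1) * (k + 1) := by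
    rw [← Finset.univ_product_univ, Finset.sum_product]
    simp only [← Finset.sum_mul, ← Finset.mul_sum, hsum]
  -- split into diag, s<t, s>t
  have hsplit : ∑ st ∈ (Finset.univ : Finset (Fin p × Fin p)), a st.1 * a st.2
      = (∑ i, a i * a i) + S + S := by
    rw [← Finset.sum_filter_add_sum_filter_not Finset.univ
        (fun st : Fin p × Fin p => st.1 = st.2)]
    have hdiag : ∑ st ∈ Finset.univ.filter (fun st : Fin p × Fin p => st.1 = st.2),
        a st.1 * a st.2 = ∑ i, a i * a i := by
      refine Finset.sum_nbij' (fun st => st.1) (fun i => (i, i)) ?_ ?_ ?_ ?_ ?_ <;>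
        simp +contextual [Finset.mem_filter] <;> intros <;>
        first | trivial | omega | ring
    have hne : ∑ st ∈ Finset.univ.filter (fun st : Fin p × Fin p => ¬ st.1 = st.2),
        a st.1 * a st.2 = S + S := by
      rw [← Finset.sum_filter_add_sum_filter_not
          (Finset.univ.filter (fun st : Fin p × Fin p => ¬ st.1 = st.2))
          (fun st : Fin p × Fin p => st.1 < st.2), Finset.filter_filter]
      congr 1
      · congr 1; apply Finset.filter_congr; intro st _
        simp only [and_iff_right_iff_imp]
        exact fun h => Fin.ne_of_lt h
      · rw [Finset.filter_filter, hS]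
        refine Finset.sum_nbij' (fun st => (st.2, st.1)) (fun st => (st.2, st.1))
          ?_ ?_ ?_ ?_ ?_ <;> simp +contextual [Finset.mem_filter] <;> intros <;>
          first | trivial | omega | ring
    omega
  -- bound on sum of squares
  have hsq : (∑ i, a i * a i) + (k + 1) ≤ k * (k + 1) := by
    have : (∑ i, a i * a i) + (∑ i, a i) ≤ ∑ i, k * a i := by
      rw [← Finset.sum_add_distrib]
      refine Finset.sum_le_sum fun i _ => ?_
      have := ha i; nlinarith
    rw [hsum, ← Finset.mul_sum, hsum] at this; exact this
  have hSk : k < S := by nlinarith [hfull.symm.trans hsplit]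
  -- product of binomials positive
  have hprod : 0 < ∏ i, (k.choose (a i) : ℤ) := by
    refine Finset.prod_pos fun i _ => ?_
    exact_mod_cast Nat.choose_pos (le_of_lt (ha i))
  have hScast : (∑ st ∈ Finset.univ.filter (fun st : Fin p × Fin p => st.1 < st.2),
      (a st.1 : ℤ) * (a st.2 : ℤ)) = (S : ℤ) := by
    rw [hS]; push_cast; rfl
  rw [hScast]
  have : (k : ℤ) < (S : ℤ) := by exact_mod_cast hSk
  exact mul_pos hprod (by linarith)
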